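/- Let F be a face of Π, i.e., F = Π ∩ l^{-1}(0) for some linear map l: ℝ^m → ℝ with l ≥ 0 on Π, and let I_F = {i ∈ {1,…,N+1} : a_i ∈ F}. Then the restriction of ψ_b to F coincides with the Legendre transform computed using only the points on F: for every η ∈ F, sup_{ξ ∈ ℝ^m} ( min_{1 ≤ i ≤ N+1} ( b_i + ⟨a_i, ξ⟩ ) − ⟨η, ξ⟩ ) = sup_{ξ ∈ ℝ^m} ( min_{i ∈ I_F} ( b_i + ⟨a_i, ξ⟩ ) − ⟨η, ξ⟩ ), both sides being finite real numbers. -/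

import Mathlib

set_option maxHeartbeats 1000000


/-- `φ_b(ξ) = min_{1 ≤ i ≤ N+1} (b i + ⟨a i, ξ⟩)`. -/
noncomputable def phiB {N m : ℕ} (a : Fin (N + 1) → (Fin m → ℝ)) (b : Fin (N + 1) → ℝ)
    (ξ : Fin m → ℝ) : ℝ :=
  ⨅ i, (b i + ∑ j, a i j * ξ j)

/-- The restriction of the Legendre transform `ψ_b` to a face `F` of `Π` coincides with
the Legendre transform computed using only the points `a i ∈ F`: for `η ∈ F`, the two
suprema over `ξ` have the same (finite) least upper bound. -/
theorem legendre_restrict_to_face {N m : ℕ} (hN : 1 ≤ N)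
    (a : Fin (N + 1) → (Fin m → ℝ)) (b : Fin (N + 1) → ℝ)
    (ha : a (Fin.last N) = 0) (hb : b (Fin.last N) = 0)
    (l : (Fin m → ℝ) →ₗ[ℝ] ℝ)
    (hl : ∀ x ∈ convexHull ℝ (Set.range a), 0 ≤ l x)
    (F : Set (Fin m → ℝ)) (hF : F = convexHull ℝ (Set.range a) ∩ {x | l x = 0})
    (η : Fin m → ℝ) (hη : η ∈ F) :
    ∃ v : ℝ,
      IsLUB (Set.range fun ξ : Fin m → ℝ => phiB a b ξ - ∑ j, η j * ξ j) v ∧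
      IsLUB (Set.range fun ξ : Fin m → ℝ =>
        sInf {r : ℝ | ∃ i, a i ∈ F ∧ r = b i + ∑ j, a i j * ξ j} - ∑ j, η j * ξ j) v := by
  classical
  have haS : ∀ i, a i ∈ convexHull ℝ (Set.range a) := fun i =>
    subset_convexHull ℝ _ ⟨i, rfl⟩
  have hηF := hη
  rw [hF] at hηF
  obtain ⟨hηS, hηl⟩ := hηF
  have hηl : l η = 0 := hηl
  have hiF : ∀ i, a i ∈ F ↔ l (a i) = 0 := by
    intro i
    rw [hF]
    exact ⟨fun h => h.2, fun h => ⟨haS i, h⟩⟩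
  -- the vector representing `l`
  set u : Fin m → ℝ := fun j => l (Pi.single j 1) with hu
  have hlx : ∀ x : Fin m → ℝ, l x = ∑ j, x j * u j := by
    intro x
    rw [LinearMap.pi_apply_eq_sum_univ l x]
    refine Finset.sum_congr rfl fun j _ => ?_
    rw [smul_eq_mul, hu]
    have he : (fun j' => if j = j' then (1:ℝ) else 0) = Pi.single j 1 := by
      ext j'; simp [Pi.single_apply, eq_comm]
    rw [he]
  -- convex combination weights for η
  have hηS' := hηS
  rw [convexHull_range_eq_exists_affineCombination] at hηS'
  obtain ⟨s, w0, hw00, hw01, hwη0⟩ := hηS'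
  rw [Finset.affineCombination_eq_linear_combination s a w0 hw01] at hwη0
  set w : Fin (N + 1) → ℝ := fun i => if i ∈ s then w0 i else 0 with hw
  have hw0 : ∀ i, 0 ≤ w i := by
    intro i
    by_cases hi : i ∈ s
    · simpa [hw, hi] using hw00 i hi
    · simp [hw, hi]
  have hwsum : ∑ i, w i = 1 := by
    rw [hw]
    simp only [Finset.sum_ite_mem, Finset.univ_inter]
    exact hw01
  have hwa : ∑ i, w i • a i = η := by
    rw [← hwη0, hw]
    simp only [ite_smul, zero_smul, Finset.sum_ite_mem, Finset.univ_inter]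
  have hηj : ∀ j, η j = ∑ i, w i * a i j := by
    intro j
    rw [← hwa]
    simp [Finset.sum_apply]
  -- l (a i) = 0 on indices with positive weight
  have hlη : ∑ i, w i * l (a i) = 0 := by
    have : l η = ∑ i, w i * l (a i) := by
      rw [← hwa, map_sum]
      simp
    rw [← this, hηl]
  have hterm : ∀ i, w i * l (a i) = 0 := by
    have := (Finset.sum_eq_zero_iff_of_nonneg
      (fun i _ => mul_nonneg (hw0 i) (hl _ (haS i)))).1 hlη
    exact fun i => this i (Finset.mem_univ i)
  -- there is a point on the face
  obtain ⟨i0, hi0⟩ : ∃ i0, a i0 ∈ F := by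
    have : ∃ i, w i ≠ 0 := by
      by_contra h
      push_neg at h
      simp [h] at hwsum
    obtain ⟨i, hi⟩ := this
    refine ⟨i, (hiF i).2 ?_⟩
    have := hterm i
    rcases mul_eq_zero.1 this with h | h
    · exact absurd h hi
    · exact h
  set A : Finset (Fin (N + 1)) := Finset.univ.filter (fun i => a i ∈ F) with hA
  have hAne : A.Nonempty := ⟨i0, by simp [hA, hi0]⟩
  -- the inf over the face, as a Finset min
  set d : (Fin m → ℝ) → Fin (N + 1) → ℝ := fun ξ i => b i + ∑ j, a i j * ξ j with hd
  have hSet : ∀ ξ : Fin m → ℝ,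
      {r : ℝ | ∃ i, a i ∈ F ∧ r = b i + ∑ j, a i j * ξ j} = ↑((A.image (d ξ))) := by
    intro ξ
    ext r
    simp only [Set.mem_setOf_eq, Finset.coe_image, Set.mem_image, Finset.mem_coe,
      Finset.mem_filter, Finset.mem_univ, true_and, hA, hd]
    constructor
    · rintro ⟨i, hi, rfl⟩; exact ⟨i, hi, rfl⟩
    · rintro ⟨i, hi, rfl⟩; exact ⟨i, hi, rfl⟩
  set M : (Fin m → ℝ) → ℝ := fun ξ => (A.image (d ξ)).min' (hAne.image _) with hM
  have hsInf : ∀ ξ, sInf {r : ℝ | ∃ i, a i ∈ F ∧ r = b i + ∑ j, a i j * ξ j} = M ξ := by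
    intro ξ
    rw [hSet ξ, Finset.Nonempty.csInf_eq_min']
  have hMle : ∀ ξ, ∀ i ∈ A, M ξ ≤ d ξ i := by
    intro ξ i hi
    exact Finset.min'_le _ _ (Finset.mem_image_of_mem _ hi)
  have hMmem : ∀ ξ, ∃ i ∈ A, d ξ i = M ξ := by
    intro ξ
    have := Finset.min'_mem (A.image (d ξ)) (hAne.image _)
    rw [Finset.mem_image] at this
    obtain ⟨i, hi, hdi⟩ := this
    exact ⟨i, hi, hdi⟩
  -- phiB bounds
  have hphile : ∀ ξ i, phiB a b ξ ≤ d ξ i := by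
    intro ξ i
    exact ciInf_le (Finite.bddBelow_range _) i
  -- the bound B
  set B : ℝ := ∑ i, w i * b i with hB
  have hbdd : ∀ ξ : Fin m → ℝ, phiB a b ξ - ∑ j, η j * ξ j ≤ B := by
    intro ξ
    have h3 : phiB a b ξ ≤ ∑ i, w i * d ξ i := by
      calc phiB a b ξ = (∑ i, w i) * phiB a b ξ := by rw [hwsum, one_mul]
        _ = ∑ i, w i * phiB a b ξ := by rw [Finset.sum_mul]
        _ ≤ ∑ i, w i * d ξ i :=
          Finset.sum_le_sum fun i _ => mul_le_mul_of_nonneg_left (hphile ξ i) (hw0 i)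
    have h4 : ∑ i, w i * d ξ i = B + ∑ j, η j * ξ j := by
      simp only [hd, mul_add, Finset.sum_add_distrib, Finset.mul_sum, hB]
      congr 1
      rw [Finset.sum_comm]
      refine Finset.sum_congr rfl fun j _ => ?_
      rw [hηj j, Finset.sum_mul]
      refine Finset.sum_congr rfl fun i _ => by ring
    linarith [h3, h4.le]
  set v : ℝ := sSup (Set.range fun ξ : Fin m → ℝ => phiB a b ξ - ∑ j, η j * ξ j) with hv
  have hlub1 : IsLUB (Set.range fun ξ : Fin m → ℝ => phiB a b ξ - ∑ j, η j * ξ j) v := by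
    refine isLUB_csSup (Set.range_nonempty _) ?_
    exact ⟨B, by rintro y ⟨ξ, rfl⟩; exact hbdd ξ⟩
  refine ⟨v, hlub1, ?_, ?_⟩
  · -- v is an upper bound for the face-restricted transform
    rintro y ⟨ξ, rfl⟩
    dsimp only
    rw [hsInf ξ]
    -- shift ξ by T • u
    obtain ⟨i1, hi1A, hi1⟩ := hMmem ξ
    set T : ℝ := Finset.univ.sup' ⟨i0, Finset.mem_univ i0⟩
      (fun i => if a i ∈ F then 0 else (M ξ - d ξ i) / l (a i)) with hT
    have hTi : ∀ i, a i ∉ F → M ξ ≤ d ξ i + T * l (a i) := by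
      intro i hi
      have hpos : 0 < l (a i) :=
        lt_of_le_of_ne (hl _ (haS i)) (fun h => hi ((hiF i).2 h.symm))
      have hle : (M ξ - d ξ i) / l (a i) ≤ T := by
        have := Finset.le_sup' (f := fun i => if a i ∈ F then 0 else (M ξ - d ξ i) / l (a i))
          (Finset.mem_univ i)
        rwa [if_neg hi] at this
      have := (div_le_iff₀ hpos).1 hle
      linarith
    set ξT : Fin m → ℝ := fun j => ξ j + T * u j with hξT
    have hdot : ∀ x : Fin m → ℝ, ∑ j, x j * ξT j = (∑ j, x j * ξ j) + T * l x := by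
      intro x
      rw [hlx x, Finset.mul_sum, ← Finset.sum_add_distrib]
      refine Finset.sum_congr rfl fun j _ => by rw [hξT]; ring
    have hdT : ∀ i, d ξT i = d ξ i + T * l (a i) := by
      intro i
      simp only [hd]
      rw [hdot (a i)]
      ring
    have hlA : ∀ i ∈ A, l (a i) = 0 := by
      intro i hi
      rw [hA, Finset.mem_filter] at hi
      exact (hiF i).1 hi.2
    have hphi : phiB a b ξT = M ξ := by
      apply le_antisymm
      · calc phiB a b ξT ≤ d ξT i1 := hphile ξT i1
          _ = d ξ i1 + T * l (a i1) := hdT i1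
          _ = M ξ := by rw [hlA i1 hi1A, hi1]; ring
      · apply le_ciInf
        intro i
        rw [show (b i + ∑ j, a i j * ξT j) = d ξ i + T * l (a i) from hdT i]
        by_cases hi : a i ∈ F
        · have hiA : i ∈ A := by simp [hA, hi]
          have h1 := hMle ξ i hiA
          rw [hlA i hiA]
          linarith
        · exact hTi i hi
    have hval : M ξ - ∑ j, η j * ξ j = phiB a b ξT - ∑ j, η j * ξT j := by
      rw [hphi, hdot η, hηl]
      ring
    rw [hval]
    exact hlub1.1 ⟨ξT, rfl⟩
  · -- v is the least upper bound
    intro c hc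
    apply hlub1.2
    rintro y ⟨ξ, rfl⟩
    have hfg : phiB a b ξ - ∑ j, η j * ξ j ≤
        sInf {r : ℝ | ∃ i, a i ∈ F ∧ r = b i + ∑ j, a i j * ξ j} - ∑ j, η j * ξ j := by
      rw [hsInf ξ]
      obtain ⟨i1, hi1A, hi1⟩ := hMmem ξ
      have := hphile ξ i1
      rw [hi1] at this
      linarith
    exact le_trans hfg (hc ⟨ξ, rfl⟩)
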